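/- Let 0 < σₙ ≤ σ₁ be real numbers, κ = σ₁/σₙ, and set α = √2/σ₁ and β₁ = √2·σ₁/(σ₁² + σₙ²). Then for every σ with σₙ ≤ σ ≤ σ₁, every complex root λ of the quadratic λ² + (α²σ² − 2)λ + (1 − αβ₁σ²) satisfies |λ| ≤ √((κ² − 1)/(κ² + 1)); moreover for σ = σₙ this quadratic has a root of modulus exactly √((κ² − 1)/(κ² + 1)). -/

import Mathlib

set_option maxHeartbeats 1000000

lemma nn_of_mul_nn (t P : ℝ) (hP : 0 < P) (h : 0 ≤ t * P) : 0 ≤ t :=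
  le_of_mul_le_mul_right (by linarith) hP

lemma real_root_bound (B c r x : ℝ) (hB0 : 0 ≤ B) (hB2r : B ≤ 2*r)
    (hfr : 0 ≤ r^2 - B*r + c) (hfnr : 0 ≤ r^2 + B*r + c)
    (heq : x^2 - B*x + c = 0) : x^2 ≤ r^2 := by
  have h1 : x ≤ r := by
    by_contra h; push_neg at h
    nlinarith [mul_pos (by linarith : (0:ℝ) < x - r) (by linarith : (0:ℝ) < x + r - B)]
  have h2 : -r ≤ x := by
    by_contra h; push_neg at h
    nlinarith [mul_pos (by linarith : (0:ℝ) < -r - x) (by linarith : (0:ℝ) < B + r - x)]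
  nlinarith

theorem gs_ogd_optimal_rate (σn σ1 κ α β₁ : ℝ) (h0 : 0 < σn) (h1 : σn ≤ σ1)
    (hκ : κ = σ1 / σn) (hα : α = Real.sqrt 2 / σ1)
    (hβ : β₁ = Real.sqrt 2 * σ1 / (σ1 ^ 2 + σn ^ 2)) :
    (∀ σ : ℝ, σn ≤ σ → σ ≤ σ1 → ∀ z : ℂ,
        z ^ 2 + ((α ^ 2 * σ ^ 2 - 2 : ℝ) : ℂ) * z + ((1 - α * β₁ * σ ^ 2 : ℝ) : ℂ) = 0 →
        ‖z‖ ≤ Real.sqrt ((κ ^ 2 - 1) / (κ ^ 2 + 1))) ∧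
      ∃ z : ℂ,
        z ^ 2 + ((α ^ 2 * σn ^ 2 - 2 : ℝ) : ℂ) * z + ((1 - α * β₁ * σn ^ 2 : ℝ) : ℂ) = 0 ∧
          ‖z‖ = Real.sqrt ((κ ^ 2 - 1) / (κ ^ 2 + 1)) := by
  have hσ1 : 0 < σ1 := lt_of_lt_of_le h0 h1
  have hS : (0:ℝ) < σ1^2 + σn^2 := by positivity
  have hs2 : Real.sqrt 2 * Real.sqrt 2 = 2 := Real.mul_self_sqrt (by norm_num)
  have hα2 : α^2 = 2/σ1^2 := by rw [hα, div_pow, pow_two, hs2]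
  have hαβ : α*β₁ = 2/(σ1^2 + σn^2) := by
    rw [hα, hβ]
    field_simp
    linear_combination hs2
  set R : ℝ := (σ1^2 - σn^2)/(σ1^2 + σn^2) with hRdef
  have hR : (κ^2-1)/(κ^2+1) = R := by
    rw [hκ, hRdef]; field_simp
  have hR0 : 0 ≤ R := by
    apply div_nonneg _ (le_of_lt hS); nlinarith
  set r : ℝ := Real.sqrt R with hrdef
  have hr0 : 0 ≤ r := Real.sqrt_nonneg _
  have hr2 : r^2 = R := Real.sq_sqrt hR0
  have hrS : r * (σ1^2 + σn^2) ≤ σ1^2 := by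
    have h : r ≤ σ1^2/(σ1^2 + σn^2) := by
      rw [hrdef, show σ1^2/(σ1^2+σn^2) = Real.sqrt ((σ1^2/(σ1^2+σn^2))^2) from
        (Real.sqrt_sq (by positivity)).symm]
      apply Real.sqrt_le_sqrt
      rw [hRdef, div_pow, div_le_div_iff₀ hS (by positivity)]
      nlinarith [mul_pos (show (0:ℝ) < σn^4 by positivity) hS]
    exact (le_div_iff₀ hS).mp h
  constructor
  · intro σ hσn hσ1' z hz
    have hσ0 : 0 < σ := lt_of_lt_of_le h0 hσn
    set B : ℝ := 2 - 2*σ^2/σ1^2 with hBdef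
    set c : ℝ := 1 - 2*σ^2/(σ1^2+σn^2) with hcdef
    have hBs : B * σ1^2 = 2*(σ1^2 - σ^2) := by rw [hBdef]; field_simp
    have hcs : c * (σ1^2+σn^2) = σ1^2 + σn^2 - 2*σ^2 := by
      rw [hcdef]; field_simp
    have hB0 : 0 ≤ B := by
      apply nn_of_mul_nn _ (σ1^2) (by positivity); rw [hBs]; nlinarith
    have hfr : 0 ≤ r^2 - B*r + c := by
      apply nn_of_mul_nn _ ((σ1^2+σn^2)*σ1^2) (by positivity)
      have key : (r^2 - B*r + c) * ((σ1^2+σn^2)*σ1^2)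
          = (σ1^2 - σn^2)*σ1^2 - 2*(σ1^2-σ^2)*(r*(σ1^2+σn^2))
            + (σ1^2+σn^2-2*σ^2)*σ1^2 := by
        rw [hr2, hRdef, hBdef, hcdef]; field_simp
      rw [key]
      nlinarith [mul_le_mul_of_nonneg_left hrS (show (0:ℝ) ≤ 2*(σ1^2-σ^2) by nlinarith)]
    have hfnr : 0 ≤ r^2 + B*r + c := by
      apply nn_of_mul_nn _ ((σ1^2+σn^2)*σ1^2) (by positivity)
      have key : (r^2 + B*r + c) * ((σ1^2+σn^2)*σ1^2)
          = (σ1^2 - σn^2)*σ1^2 + 2*(σ1^2-σ^2)*(r*(σ1^2+σn^2))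
            + (σ1^2+σn^2-2*σ^2)*σ1^2 := by
        rw [hr2, hRdef, hBdef, hcdef]; field_simp
      rw [key]
      nlinarith [mul_nonneg (mul_nonneg (show (0:ℝ) ≤ 2*(σ1^2-σ^2) by nlinarith)
        hr0) hS.le, mul_nonneg (show (0:ℝ) ≤ σ1^2-σ^2 by nlinarith) (sq_nonneg σ1)]
    have hB2r : B ≤ 2*r := by
      rcases eq_or_lt_of_le hr0 with hre | hrpos
      · have hR0' : R = 0 := by rw [← hr2, ← hre]; ring
        have hss : σ1^2 = σn^2 := by
          rw [hRdef, div_eq_zero_iff] at hR0'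
          rcases hR0' with h | h
          · linarith
          · exfalso; linarith
        have hσσ : σ^2 = σ1^2 := by nlinarith
        have hB00 : B = 0 := by
          rw [hBdef, hσσ, mul_div_assoc, div_self (by positivity : σ1^2 ≠ 0)]
          ring
        rw [hB00, ← hre]; norm_num
      · have h2 : B * r ≤ 2*r * r := by
          apply le_of_mul_le_mul_right _ hS
          calc B * r * (σ1^2+σn^2) = B * (r * (σ1^2+σn^2)) := by ring
            _ ≤ B * σ1^2 := mul_le_mul_of_nonneg_left hrS hB0
            _ = 2*(σ1^2 - σ^2) := hBs
            _ ≤ 2*(σ1^2 - σn^2) := by nlinarith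
            _ = 2*(R * (σ1^2+σn^2)) := by rw [hRdef]; field_simp
            _ = 2*r * r * (σ1^2+σn^2) := by rw [show 2*r*r*(σ1^2+σn^2) = 2*(r^2*(σ1^2+σn^2)) by ring, hr2]
        exact le_of_mul_le_mul_right h2 hrpos
    have hc_le : c ≤ R := by
      have h : 0 ≤ (R - c) := by
        apply nn_of_mul_nn _ (σ1^2+σn^2) hS
        have : (R - c) * (σ1^2+σn^2) = 2*σ^2 - 2*σn^2 := by
          rw [hRdef, hcdef]; field_simp; ring
        rw [this]; nlinarith
      linarith
    -- rewrite coefficients in hz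
    rw [show (α^2*σ^2 - 2 : ℝ) = -B from by rw [hα2, hBdef]; ring,
        show (1 - α*β₁*σ^2 : ℝ) = c from by rw [hαβ, hcdef]; ring] at hz
    -- extract real and imaginary parts
    rw [pow_two, Complex.ext_iff] at hz
    simp [Complex.mul_re, Complex.mul_im, Complex.add_re, Complex.add_im] at hz
    obtain ⟨hre, him⟩ := hz
    set x := z.re
    set y := z.im
    have him' : y * (2*x - B) = 0 := by linear_combination him
    have hre' : x^2 - y^2 - B*x + c = 0 := by linear_combination hre
    have hmain : x^2 + y^2 ≤ R := by
      rcases mul_eq_zero.mp him' with hy | hx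
      · have heq : x^2 - B*x + c = 0 := by rw [hy] at hre'; linarith [hre']
        have := real_root_bound B c r x hB0 hB2r hfr hfnr heq
        rw [hr2] at this
        rw [hy]
        norm_num
        exact this
      · have hx2 : 2*x = B := by linarith
        have : x^2 + y^2 = c := by linear_combination -hre' + x*hx2
        linarith
    rw [hR]
    have habs : ‖z‖ = Real.sqrt (x^2 + y^2) := by
      rw [Complex.norm_def, Complex.normSq_apply]; ring_nf; rfl
    rw [habs]
    exact Real.sqrt_le_sqrt hmain
  · -- attainment at σ = σn
    set x : ℝ := 1 - σn^2/σ1^2 with hxdef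
    have hRx : 0 ≤ R - x^2 := by
      apply nn_of_mul_nn _ ((σ1^2+σn^2)*σ1^4) (by positivity)
      have key : (R - x^2) * ((σ1^2+σn^2)*σ1^4) = (σ1^2-σn^2)*σn^4 := by
        rw [hRdef, hxdef]; field_simp; ring
      rw [key]
      exact mul_nonneg (by nlinarith) (by positivity)
    set y : ℝ := Real.sqrt (R - x^2) with hydef
    have hy2 : y^2 = R - x^2 := Real.sq_sqrt hRx
    refine ⟨(x : ℂ) + (y : ℂ) * Complex.I, ?_, ?_⟩
    · rw [show (α^2*σn^2 - 2 : ℝ) = -(2*x) from by rw [hα2, hxdef]; field_simp; ring,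
          show (1 - α*β₁*σn^2 : ℝ) = R from by rw [hαβ, hRdef]; field_simp; ring]
      rw [pow_two, Complex.ext_iff]
      simp [Complex.mul_re, Complex.mul_im, Complex.add_re, Complex.add_im]
      constructor
      · linear_combination -hy2
      · ring
    · rw [hR]
      have habs : ‖(x:ℂ) + (y:ℂ)*Complex.I‖ = Real.sqrt (x^2 + y^2) := by
        rw [Complex.norm_def, Complex.normSq_apply]
        simp
        ring_nf
      rw [habs, show x^2 + y^2 = R from by rw [hy2]; ring]
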